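/- For all integers 2 ≤ j < k there exist an integer n ≥ k and a set T of k-element subsets of {1,…,n}, any two distinct members of which intersect in at most j elements, such that for A = R^{j,k} (with this n, and T^c the set of all remaining k-element subsets) the matrix A_T^*A_T is invertible and ‖A_{T^c}^* A_T (A_T^*A_T)^{−1}‖_∞ > 1. -/

import Mathlib

open scoped Classical
open Finset Matrix

noncomputable section

/-- The normalized Radon matrix `R^{j,k}`: rows are indexed by `j`-element subsets of
`{1,…,n}`, columns by `k`-element subsets, with entry `1/√(C(k,j))` if the row set is
contained in the column set and `0` otherwise. -/
def radon (n j k : ℕ) :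
    Matrix {σ : Finset (Fin n) // σ.card = j} {τ : Finset (Fin n) // τ.card = k} ℝ :=
  fun σ τ => if σ.1 ⊆ τ.1 then 1 / Real.sqrt (k.choose j) else 0

/-- The submatrix of `A` consisting of the columns indexed by `T`. -/
def colSub {m p R : Type*} (A : Matrix m p R) (T : Finset p) :
    Matrix m {x // x ∈ T} R :=
  fun i t => A i t.1

/-- Maximum absolute row sum of a matrix, `‖M‖_∞`. -/
def matInfNorm {m p : Type*} [Fintype p] (M : Matrix m p ℝ) : ℝ :=
  ⨆ i, ∑ j, |M i j|

/-- Maximum absolute column sum of a matrix, `‖M‖₁`. -/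
def matOneNorm {m p : Type*} [Fintype m] (M : Matrix m p ℝ) : ℝ :=
  ⨆ j, ∑ i, |M i j|

/-- `ℓ¹` norm of a vector. -/
def vecOneNorm {m : Type*} [Fintype m] (u : m → ℝ) : ℝ := ∑ i, |u i|

/-- `ℓ^∞` norm of a vector. -/
def vecInfNorm {m : Type*} (u : m → ℝ) : ℝ := ⨆ i, |u i|

namespace Stmt8

variable (j k : ℕ)

abbrev GT := Sum (Fin k) (Finset (Fin k) × Bool × Fin (k - j))

def nn : ℕ := k + 2 ^ k * (2 * (k - j))

lemma card_GT : Fintype.card (GT j k) = nn j k := by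
  simp [nn, Fintype.card_finset]

def ee : GT j k ≃ Fin (nn j k) := Fintype.equivFinOfCardEq (card_GT j k)

def embL : Fin k ↪ Fin (nn j k) :=
  ⟨fun i => ee j k (Sum.inl i), fun a b h => by
    simpa using (ee j k).injective h⟩

def embR (σ : Finset (Fin k)) (b : Bool) : Fin (k - j) ↪ Fin (nn j k) :=
  ⟨fun r => ee j k (Sum.inr (σ, b, r)), fun a b h => by
    simpa using (ee j k).injective h⟩

def KK : Finset (Fin (nn j k)) := Finset.univ.map (embL j k)

def tau (σ : Finset (Fin k)) (b : Bool) : Finset (Fin (nn j k)) :=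
  σ.map (embL j k) ∪ Finset.univ.map (embR j k σ b)

lemma disj_LR (σ σ' : Finset (Fin k)) (b : Bool) :
    Disjoint (σ.map (embL j k)) (Finset.univ.map (embR j k σ' b)) := by
  rw [Finset.disjoint_left]
  rintro x hx hx'
  obtain ⟨i, _, rfl⟩ := Finset.mem_map.mp hx
  obtain ⟨r, _, h⟩ := Finset.mem_map.mp hx'
  exact absurd ((ee j k).injective h) (by simp [embL, embR])

lemma disj_RR {σ σ' : Finset (Fin k)} {b b' : Bool} (h : (σ, b) ≠ (σ', b')) :
    Disjoint (Finset.univ.map (embR j k σ b)) (Finset.univ.map (embR j k σ' b')) := by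
  rw [Finset.disjoint_left]
  rintro x hx hx'
  obtain ⟨r, _, rfl⟩ := Finset.mem_map.mp hx
  obtain ⟨r', _, h'⟩ := Finset.mem_map.mp hx'
  have := (ee j k).injective h'
  simp only [embR, Function.Embedding.coeFn_mk, Sum.inr.injEq, Prod.mk.injEq] at this
  exact h (by simp [this.1, this.2.1])

lemma card_KK : (KK j k).card = k := by simp [KK]

lemma card_tau (σ : Finset (Fin k)) (b : Bool) (hσ : σ.card = j) (hjk : j ≤ k) :
    (tau j k σ b).card = k := by
  rw [tau, Finset.card_union_of_disjoint (disj_LR j k σ σ b)]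
  simp [hσ, Nat.add_sub_cancel' hjk]

lemma tau_inter_tau (σ σ' : Finset (Fin k)) (b b' : Bool) (h : (σ, b) ≠ (σ', b')) :
    tau j k σ b ∩ tau j k σ' b' = (σ ∩ σ').map (embL j k) := by
  rw [tau, tau, Finset.union_inter_distrib_right, Finset.inter_union_distrib_left,
    Finset.inter_union_distrib_left, ← Finset.map_inter]
  rw [Finset.disjoint_iff_inter_eq_empty.mp (disj_LR j k σ σ' b'),
    Finset.disjoint_iff_inter_eq_empty.mp ((disj_LR j k σ' σ b).symm),
    Finset.disjoint_iff_inter_eq_empty.mp (disj_RR j k h)]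
  simp

lemma KK_inter_tau (σ : Finset (Fin k)) (b : Bool) :
    KK j k ∩ tau j k σ b = σ.map (embL j k) := by
  rw [KK, tau, Finset.inter_union_distrib_left, ← Finset.map_inter,
    Finset.disjoint_iff_inter_eq_empty.mp (disj_LR j k Finset.univ σ b)]
  simp


lemma radon_entry (n : ℕ) (τ₁ τ₂ : {τ : Finset (Fin n) // τ.card = k}) :
    ∑ σ : {σ : Finset (Fin n) // σ.card = j}, radon n j k σ τ₁ * radon n j k σ τ₂
      = (((τ₁.1 ∩ τ₂.1).card.choose j : ℝ)) / (k.choose j) := by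
  have hc0 : (0:ℝ) ≤ (k.choose j : ℝ) := by positivity
  have hterm : ∀ σ : {σ : Finset (Fin n) // σ.card = j},
      radon n j k σ τ₁ * radon n j k σ τ₂
        = if σ.1 ⊆ τ₁.1 ∩ τ₂.1 then 1/((k.choose j : ℝ)) else 0 := by
    intro σ
    by_cases h1 : σ.1 ⊆ τ₁.1 <;> by_cases h2 : σ.1 ⊆ τ₂.1 <;>
      simp [radon, h1, h2, Finset.subset_inter_iff]
    rw [← mul_inv, Real.mul_self_sqrt hc0]
  rw [Fintype.sum_congr _ _ hterm]
  rw [← Finset.sum_subtype (Finset.powersetCard j Finset.univ)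
    (fun x => Finset.mem_powersetCard_univ) (fun σ => if σ ⊆ τ₁.1 ∩ τ₂.1 then 1/((k.choose j : ℝ)) else 0)]
  rw [Finset.sum_ite, Finset.sum_const_zero, Finset.sum_const, add_zero]
  have hfil : (Finset.powersetCard j (Finset.univ : Finset (Fin n))).filter
      (fun σ => σ ⊆ τ₁.1 ∩ τ₂.1) = Finset.powersetCard j (τ₁.1 ∩ τ₂.1) := by
    ext σ
    simp only [Finset.mem_filter, Finset.mem_powersetCard]
    exact ⟨fun h => ⟨h.2, h.1.2⟩, fun h => ⟨⟨Finset.subset_univ σ, h.2⟩, h.1⟩⟩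
  rw [hfil, Finset.card_powersetCard]
  simp [div_eq_mul_inv]

def gg (p : Finset (Fin k) × Bool) : {τ : Finset (Fin (nn j k)) // τ.card = k} :=
  if h : (tau j k p.1 p.2).card = k then ⟨_, h⟩ else ⟨KK j k, card_KK j k⟩

lemma gg_eq {p : Finset (Fin k) × Bool} (hp : p.1.card = j) (hjk : j ≤ k) :
    (gg j k p).1 = tau j k p.1 p.2 := by
  rw [gg, dif_pos (card_tau j k p.1 p.2 hp hjk)]

def SS : Finset (Finset (Fin k)) := Finset.powersetCard j Finset.univ

def TT : Finset {τ : Finset (Fin (nn j k)) // τ.card = k} :=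
  (SS j k ×ˢ Finset.univ).image (gg j k)

lemma mem_block (σ : Finset (Fin k)) (b : Bool) (r : Fin (k - j)) :
    (embR j k σ b) r ∈ tau j k σ b :=
  Finset.mem_union_right _ (Finset.mem_map_of_mem _ (Finset.mem_univ r))

lemma tau_inj (hjk : j < k) {σ σ' : Finset (Fin k)} {b b' : Bool}
    (h : tau j k σ b = tau j k σ' b') : σ = σ' ∧ b = b' := by
  have hr : (0 : ℕ) < k - j := Nat.sub_pos_of_lt hjk
  have hm := mem_block j k σ b ⟨0, hr⟩
  rw [h, tau, Finset.mem_union] at hm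
  rcases hm with hm | hm
  · obtain ⟨i, _, hi⟩ := Finset.mem_map.mp hm
    exact absurd ((ee j k).injective hi) (by simp [embL, embR])
  · obtain ⟨r, _, hr'⟩ := Finset.mem_map.mp hm
    have := (ee j k).injective hr'
    simp only [embR, Function.Embedding.coeFn_mk, Sum.inr.injEq, Prod.mk.injEq] at this
    exact ⟨this.1.symm, this.2.1.symm⟩

lemma KK_ne_tau (hjk : j < k) (σ : Finset (Fin k)) (b : Bool) :
    KK j k ≠ tau j k σ b := by
  intro h
  have hr : (0 : ℕ) < k - j := Nat.sub_pos_of_lt hjk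
  have hm := mem_block j k σ b ⟨0, hr⟩
  rw [← h, KK] at hm
  obtain ⟨i, _, hi⟩ := Finset.mem_map.mp hm
  exact absurd ((ee j k).injective hi) (by simp [embL, embR])

lemma KK_not_mem_TT (hjk : j < k) : (⟨KK j k, card_KK j k⟩ : {τ : Finset (Fin (nn j k)) // τ.card = k}) ∉ TT j k := by
  intro h
  obtain ⟨p, hp, hgg⟩ := Finset.mem_image.mp h
  have hp1 : p.1.card = j := Finset.mem_powersetCard_univ.mp (Finset.mem_product.mp hp).1
  have := congrArg Subtype.val hgg
  rw [gg_eq j k hp1 hjk.le] at this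
  exact KK_ne_tau j k hjk p.1 p.2 this.symm

def EQ (hjk : j < k) : ({σ // σ ∈ SS j k} × Bool) ≃ {x // x ∈ TT j k} :=
  Equiv.ofBijective
    (fun x => ⟨gg j k (x.1.1, x.2),
      Finset.mem_image_of_mem _ (Finset.mem_product.mpr ⟨x.1.2, Finset.mem_univ _⟩)⟩)
    (by
      constructor
      · rintro ⟨⟨σ, hσ⟩, b⟩ ⟨⟨σ', hσ'⟩, b'⟩ hxy
        have h1 : σ.card = j := Finset.mem_powersetCard_univ.mp hσ
        have h2 : σ'.card = j := Finset.mem_powersetCard_univ.mp hσ'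
        have := congrArg (fun z => (Subtype.val z).val) hxy
        simp only at this
        rw [gg_eq j k h1 hjk.le, gg_eq j k h2 hjk.le] at this
        obtain ⟨hs, hb⟩ := tau_inj j k hjk this
        exact Prod.ext (Subtype.ext hs) hb
      · rintro ⟨t, ht⟩
        obtain ⟨p, hp, hgg⟩ := Finset.mem_image.mp ht
        exact ⟨⟨⟨p.1, (Finset.mem_product.mp hp).1⟩, p.2⟩, by simp [hgg]⟩)

section Main

lemma card_iota (hjk : j < k) :
    Fintype.card ({σ // σ ∈ SS j k} × Bool) = 2 * k.choose j := by
  simp [SS, Fintype.card_coe, Finset.card_powersetCard]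
  ring

lemma inter_lt (hjk : j < k) {σ σ' : Finset (Fin k)} (h1 : σ.card = j) (h2 : σ'.card = j)
    (hne : σ ≠ σ') : (σ ∩ σ').card < j := by
  rcases lt_or_eq_of_le (le_trans (Finset.card_le_card (Finset.inter_subset_left)) h1.le) with h | h
  · exact h
  · exfalso
    have h3 : σ ∩ σ' = σ := Finset.eq_of_subset_of_card_le Finset.inter_subset_left (by rw [h, h1])
    have h4 : σ ⊆ σ' := h3 ▸ Finset.inter_subset_right
    exact hne (Finset.eq_of_subset_of_card_le h4 (by rw [h1, h2]))

lemma gram_apply (hjk : j < k) (x y : {σ // σ ∈ SS j k} × Bool) :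
    ((colSub (radon (nn j k) j k) (TT j k))ᵀ * colSub (radon (nn j k) j k) (TT j k))
        (EQ j k hjk x) (EQ j k hjk y)
      = if x = y then 1 else if x.1 = y.1 then ((k.choose j : ℝ))⁻¹ else 0 := by
  have hcard : ∀ z : {σ // σ ∈ SS j k} × Bool, (z.1.1 : Finset (Fin k)).card = j :=
    fun z => Finset.mem_powersetCard_univ.mp z.1.2
  have hc : (0:ℝ) < (k.choose j : ℝ) := by
    exact_mod_cast Nat.choose_pos hjk.le
  have hval : ∀ z : {σ // σ ∈ SS j k} × Bool,
      ((EQ j k hjk z).1 : Finset (Fin (nn j k))) = tau j k z.1.1 z.2 := by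
    intro z
    show (gg j k (z.1.1, z.2)).1 = _
    exact gg_eq j k (hcard z) hjk.le
  have hsum : ((colSub (radon (nn j k) j k) (TT j k))ᵀ * colSub (radon (nn j k) j k) (TT j k))
        (EQ j k hjk x) (EQ j k hjk y)
      = ((((EQ j k hjk x).1.1 ∩ (EQ j k hjk y).1.1).card.choose j : ℝ)) / (k.choose j) := by
    rw [← radon_entry j k (nn j k) (EQ j k hjk x).1 (EQ j k hjk y).1, Matrix.mul_apply]
    rfl
  rw [hsum]
  by_cases hxy : x = y
  · subst hxy
    rw [if_pos rfl, Finset.inter_self, (EQ j k hjk x).1.2, div_self (ne_of_gt hc)]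
  · rw [if_neg hxy]
    have hpq : (x.1.1, x.2) ≠ (y.1.1, y.2) := by
      intro h
      apply hxy
      obtain ⟨h1, h2⟩ := Prod.mk.injEq _ _ _ _ ▸ h
      exact Prod.ext (Subtype.ext (by exact h1)) (by exact h2)
    have hint : ((EQ j k hjk x).1.1 ∩ (EQ j k hjk y).1.1).card = (x.1.1 ∩ y.1.1).card := by
      rw [hval x, hval y, tau_inter_tau j k _ _ _ _ hpq, Finset.card_map]
    rw [hint]
    by_cases hss : x.1 = y.1
    · rw [if_pos hss, hss, Finset.inter_self, hcard y, Nat.choose_self]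
      simp
    · rw [if_neg hss]
      have : (x.1.1 ∩ y.1.1).card < j :=
        inter_lt j k hjk (hcard x) (hcard y) (fun h => hss (Subtype.ext h))
      rw [Nat.choose_eq_zero_of_lt this]
      simp

lemma row_apply (hjk : j < k) (x : {σ // σ ∈ SS j k} × Bool) :
    ((colSub (radon (nn j k) j k) ((TT j k)ᶜ))ᵀ * colSub (radon (nn j k) j k) (TT j k))
      ⟨⟨KK j k, card_KK j k⟩, Finset.mem_compl.mpr (KK_not_mem_TT j k hjk)⟩ (EQ j k hjk x)
      = ((k.choose j : ℝ))⁻¹ := by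
  have hcard : (x.1.1 : Finset (Fin k)).card = j := Finset.mem_powersetCard_univ.mp x.1.2
  have hval : ((EQ j k hjk x).1 : Finset (Fin (nn j k))) = tau j k x.1.1 x.2 := by
    show (gg j k (x.1.1, x.2)).1 = _
    exact gg_eq j k hcard hjk.le
  have hsum : ((colSub (radon (nn j k) j k) ((TT j k)ᶜ))ᵀ * colSub (radon (nn j k) j k) (TT j k))
      ⟨⟨KK j k, card_KK j k⟩, Finset.mem_compl.mpr (KK_not_mem_TT j k hjk)⟩ (EQ j k hjk x)
      = (((KK j k ∩ (EQ j k hjk x).1.1).card.choose j : ℝ)) / (k.choose j) := by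
    rw [← radon_entry j k (nn j k) ⟨KK j k, card_KK j k⟩ (EQ j k hjk x).1, Matrix.mul_apply]
    rfl
  rw [hsum, hval, KK_inter_tau, Finset.card_map, hcard, Nat.choose_self]
  simp

def Wm : Matrix ({σ // σ ∈ SS j k} × Bool) ({σ // σ ∈ SS j k} × Bool) ℝ :=
  fun x y => if y = (x.1, !x.2) then 1 else 0

lemma Wm_mul_Wm : Wm j k * Wm j k = 1 := by
  ext x z
  rw [Matrix.mul_apply, Finset.sum_eq_single (x.1, !x.2)]
  · rcases eq_or_ne x z with h | h
    · subst h; simp [Wm, Bool.not_not, Matrix.one_apply]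
    · simp [Wm, Bool.not_not, Matrix.one_apply, h, Ne.symm h]
  · intro y _ hy
    simp [Wm, hy]
  · simp

def Pm : Matrix ({σ // σ ∈ SS j k} × Bool) ({σ // σ ∈ SS j k} × Bool) ℝ :=
  1 + ((k.choose j : ℝ))⁻¹ • Wm j k

lemma Pm_apply (x y : {σ // σ ∈ SS j k} × Bool) :
    Pm j k x y
      = (if x = y then 1 else 0) + ((k.choose j : ℝ))⁻¹ * (if y = (x.1, !x.2) then 1 else 0) := by
  simp [Pm, Wm, Matrix.one_apply, Matrix.add_apply, Matrix.smul_apply]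

lemma ite_form (c : ℝ) (x y : {σ // σ ∈ SS j k} × Bool) :
    (if x = y then (1:ℝ) else if x.1 = y.1 then c else 0)
      = (if x = y then 1 else 0) + c * (if y = (x.1, !x.2) then 1 else 0) := by
  have hxswap : x ≠ (x.1, !x.2) := by
    intro h
    have := congrArg Prod.snd h
    simp at this
  by_cases hxy : x = y
  · subst hxy
    rw [if_pos rfl, if_pos rfl, if_neg (Ne.symm (Ne.symm hxswap))]
    ring
  · rw [if_neg hxy, if_neg hxy]
    by_cases hss : x.1 = y.1
    · have hb : y.2 = !x.2 := by
        rcases Bool.eq_or_eq_not y.2 x.2 with h | h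
        · exact absurd (Prod.ext hss.symm h).symm hxy
        · exact h
      have hy : y = (x.1, !x.2) := Prod.ext (by exact hss.symm) hb
      rw [if_pos hss, if_pos hy]
      ring
    · have hy : y ≠ (x.1, !x.2) := by
        intro h
        exact hss (by rw [h])
      rw [if_neg hss, if_neg hy]
      ring

lemma choose_two_le (hj : 2 ≤ j) (hjk : j < k) : 2 ≤ k.choose j := by
  have h1 : j + 1 ≤ (j+1).choose j := by
    rw [Nat.choose_succ_self_right]
  have h2 : (j+1).choose j ≤ k.choose j := Nat.choose_le_choose j hjk
  omega

lemma Pm_isUnit (hj : 2 ≤ j) (hjk : j < k) : IsUnit (Pm j k) := by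
  set ε : ℝ := ((k.choose j : ℝ))⁻¹ with hε
  have hc2 : (2:ℝ) ≤ (k.choose j : ℝ) := by exact_mod_cast choose_two_le j k hj hjk
  have hεlt : ε < 1 := by
    rw [hε]
    rw [inv_lt_one_iff₀]
    right; linarith
  have hεpos : 0 < ε := by
    rw [hε]; positivity
  have hne : 1 - ε * ε ≠ 0 := by nlinarith
  set a : ℝ := (1 - ε * ε)⁻¹ with ha
  set Q : Matrix ({σ // σ ∈ SS j k} × Bool) ({σ // σ ∈ SS j k} × Bool) ℝ :=
    a • (1 : Matrix _ _ ℝ) - (a * ε) • Wm j k with hQ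
  have hPQ : Pm j k * Q = 1 := by
    rw [Pm, hQ, Matrix.add_mul, Matrix.mul_sub, Matrix.mul_sub,
      Matrix.mul_smul, Matrix.mul_smul, Matrix.mul_smul, Matrix.mul_smul,
      Matrix.one_mul, Matrix.one_mul, Matrix.smul_mul, Matrix.smul_mul,
      Matrix.mul_one, Wm_mul_Wm, smul_smul, smul_smul]
    simp only [← hε]
    have habel : a • (1 : Matrix ({σ // σ ∈ SS j k} × Bool) ({σ // σ ∈ SS j k} × Bool) ℝ)
          - (a * ε) • Wm j k + ((a * ε) • Wm j k - (a * ε * ε) • 1)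
        = a • 1 - (a * ε * ε) • 1 := by abel
    rw [habel, ← sub_smul]
    have hone : a - a * ε * ε = 1 := by
      rw [ha]
      field_simp
      exact div_self (by rwa [sq])
    rw [hone, one_smul]
  have hQP : Q * Pm j k = 1 := mul_eq_one_comm.mp hPQ
  exact ⟨⟨Pm j k, Q, hPQ, hQP⟩, rfl⟩

lemma gram_eq (hjk : j < k) :
    (colSub (radon (nn j k) j k) (TT j k))ᵀ * colSub (radon (nn j k) j k) (TT j k)
      = (Matrix.reindexAlgEquiv ℝ ℝ (EQ j k hjk)) (Pm j k) := by
  ext a b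
  rw [Matrix.reindexAlgEquiv_apply, Matrix.reindex_apply, Matrix.submatrix_apply]
  have h := gram_apply j k hjk ((EQ j k hjk).symm a) ((EQ j k hjk).symm b)
  rw [Equiv.apply_symm_apply, Equiv.apply_symm_apply] at h
  rw [h, ite_form, ← Pm_apply]

lemma gram_isUnit (hj : 2 ≤ j) (hjk : j < k) :
    IsUnit ((colSub (radon (nn j k) j k) (TT j k))ᵀ * colSub (radon (nn j k) j k) (TT j k)) := by
  rw [gram_eq j k hjk]
  exact (Pm_isUnit j k hj hjk).map (Matrix.reindexAlgEquiv ℝ ℝ (EQ j k hjk))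

lemma gram_rowsum (hjk : j < k) (y : {x // x ∈ TT j k}) :
    ∑ s, |((colSub (radon (nn j k) j k) (TT j k))ᵀ * colSub (radon (nn j k) j k) (TT j k)) y s|
      = 1 + ((k.choose j : ℝ))⁻¹ := by
  set G := (colSub (radon (nn j k) j k) (TT j k))ᵀ * colSub (radon (nn j k) j k) (TT j k) with hGdef
  set x := (EQ j k hjk).symm y with hx
  have hεnn : (0:ℝ) ≤ ((k.choose j : ℝ))⁻¹ := by positivity
  have step : ∀ x' : {σ // σ ∈ SS j k} × Bool,
      |G y (EQ j k hjk x')|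
        = (if x = x' then (1:ℝ) else 0)
          + ((k.choose j : ℝ))⁻¹ * (if x' = (x.1, !x.2) then 1 else 0) := by
    intro x'
    have hy : y = EQ j k hjk x := (Equiv.apply_symm_apply _ _).symm
    rw [hy, hGdef, gram_apply j k hjk x x', ite_form]
    refine abs_of_nonneg (add_nonneg ?_ (mul_nonneg hεnn ?_)) <;> split <;> norm_num
  rw [← Equiv.sum_comp (EQ j k hjk) (fun s => |G y s|)]
  simp only [step]
  rw [Finset.sum_add_distrib, ← Finset.mul_sum]
  simp

end Main
end Stmt8

/-- for all `2 ≤ j < k` there exist `n ≥ k` and a set `T` of `k`-cliques,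
pairwise overlapping in at most `j` nodes, such that `A_T^*A_T` is invertible and
`‖A_{T^c}^* A_T (A_T^*A_T)⁻¹‖_∞ > 1`. -/
theorem stmt8 (j k : ℕ) (hj : 2 ≤ j) (hjk : j < k) :
    ∃ n, k ≤ n ∧ ∃ T : Finset {τ : Finset (Fin n) // τ.card = k},
      (∀ σ₁ ∈ T, ∀ σ₂ ∈ T, σ₁ ≠ σ₂ → (σ₁.1 ∩ σ₂.1).card ≤ j) ∧
      IsUnit ((colSub (radon n j k) T)ᵀ * colSub (radon n j k) T) ∧
      1 < matInfNorm ((colSub (radon n j k) Tᶜ)ᵀ * colSub (radon n j k) T *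
        (((colSub (radon n j k) T)ᵀ * colSub (radon n j k) T)⁻¹)) := by
  refine ⟨Stmt8.nn j k, Nat.le_add_right _ _, Stmt8.TT j k, ?_, Stmt8.gram_isUnit j k hj hjk, ?_⟩
  · rintro ⟨s₁, hc₁⟩ hm₁ ⟨s₂, hc₂⟩ hm₂ hne
    obtain ⟨p, hp, hgg₁⟩ := Finset.mem_image.mp hm₁
    obtain ⟨q, hq, hgg₂⟩ := Finset.mem_image.mp hm₂
    have hp1 : p.1.card = j := Finset.mem_powersetCard_univ.mp (Finset.mem_product.mp hp).1
    have hq1 : q.1.card = j := Finset.mem_powersetCard_univ.mp (Finset.mem_product.mp hq).1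
    have hv₁ : s₁ = Stmt8.tau j k p.1 p.2 := by
      have := congrArg Subtype.val hgg₁
      rw [Stmt8.gg_eq j k hp1 hjk.le] at this
      exact this.symm
    have hv₂ : s₂ = Stmt8.tau j k q.1 q.2 := by
      have := congrArg Subtype.val hgg₂
      rw [Stmt8.gg_eq j k hq1 hjk.le] at this
      exact this.symm
    have hpq : (p.1, p.2) ≠ (q.1, q.2) := by
      intro h
      apply hne
      rw [← hgg₁, ← hgg₂]
      exact congrArg (Stmt8.gg j k) (Prod.ext (congrArg Prod.fst h) (congrArg Prod.snd h))
    simp only [hv₁, hv₂]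
    rw [Stmt8.tau_inter_tau j k p.1 q.1 p.2 q.2 hpq, Finset.card_map]
    exact le_trans (Finset.card_le_card Finset.inter_subset_left) hp1.le
  · set A := radon (Stmt8.nn j k) j k with hA
    set T := Stmt8.TT j k with hT
    set G := (colSub A T)ᵀ * colSub A T with hG
    set B := (colSub A Tᶜ)ᵀ * colSub A T with hB
    set ε : ℝ := ((k.choose j : ℝ))⁻¹ with hε
    have hc2 : (2:ℝ) ≤ (k.choose j : ℝ) := by
      exact_mod_cast Stmt8.choose_two_le j k hj hjk
    have hεpos : 0 < ε := by rw [hε]; positivity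
    have hεlt : ε ≤ 1/2 := by
      rw [hε]
      rw [inv_le_iff_one_le_mul₀ (by linarith)]
      linarith
    have hunit : IsUnit G := Stmt8.gram_isUnit j k hj hjk
    have hdet : IsUnit G.det := (Matrix.isUnit_iff_isUnit_det G).mp hunit
    have hMG : (B * G⁻¹) * G = B := by
      rw [Matrix.mul_assoc, Matrix.nonsing_inv_mul G hdet, Matrix.mul_one]
    set i₀ : {x // x ∈ Tᶜ} :=
      ⟨⟨Stmt8.KK j k, Stmt8.card_KK j k⟩, Finset.mem_compl.mpr (Stmt8.KK_not_mem_TT j k hjk)⟩ with hi₀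
    have hrowB : ∀ x : {σ // σ ∈ Stmt8.SS j k} × Bool, B i₀ (Stmt8.EQ j k hjk x) = ε :=
      fun x => Stmt8.row_apply j k hjk x
    have h2 : ∑ s, |B i₀ s| = 2 := by
      rw [← Equiv.sum_comp (Stmt8.EQ j k hjk) (fun s => |B i₀ s|)]
      have : ∀ x : {σ // σ ∈ Stmt8.SS j k} × Bool, |B i₀ (Stmt8.EQ j k hjk x)| = ε := by
        intro x
        rw [hrowB x]
        exact abs_of_pos hεpos
      simp only [this]
      rw [Finset.sum_const, Finset.card_univ, Stmt8.card_iota j k hjk, nsmul_eq_mul]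
      push_cast
      rw [hε]
      field_simp
    have hSnn : (0:ℝ) ≤ ∑ s, |(B * G⁻¹) i₀ s| :=
      Finset.sum_nonneg fun s _ => abs_nonneg _
    have hle : (2:ℝ) ≤ (1 + ε) * ∑ s, |(B * G⁻¹) i₀ s| := by
      calc (2:ℝ) = ∑ s, |B i₀ s| := h2.symm
        _ = ∑ s, |((B * G⁻¹) * G) i₀ s| := by rw [hMG]
        _ = ∑ s, |∑ y, (B * G⁻¹) i₀ y * G y s| := by simp only [Matrix.mul_apply]
        _ ≤ ∑ s, ∑ y, |(B * G⁻¹) i₀ y * G y s| :=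
            Finset.sum_le_sum fun s _ => Finset.abs_sum_le_sum_abs _ _
        _ = ∑ y, ∑ s, |(B * G⁻¹) i₀ y| * |G y s| := by
            rw [Finset.sum_comm]
            simp only [abs_mul]
        _ = ∑ y, |(B * G⁻¹) i₀ y| * (1 + ε) := by
            refine Finset.sum_congr rfl fun y _ => ?_
            rw [← Finset.mul_sum, Stmt8.gram_rowsum j k hjk y]
        _ = (1 + ε) * ∑ y, |(B * G⁻¹) i₀ y| := by
            rw [← Finset.sum_mul, mul_comm]
    have hS : 1 < ∑ s, |(B * G⁻¹) i₀ s| := by nlinarith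
    refine lt_of_lt_of_le hS ?_
    show _ ≤ ⨆ i, ∑ s, |(B * G⁻¹) i s|
    exact le_ciSup (f := fun i => ∑ s, |(B * G⁻¹) i s|)
      (Set.Finite.bddAbove (Set.finite_range _)) i₀
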